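/- For every integer k ≥ 2 and every word w, maj_{k−1}(w) = maj_k(φ^{(k)}(w)). -/

import Mathlib

open scoped Classical

/-- `x` splits the pair `a`, `b` if `a ≤ x < b` or `b ≤ x < a`. -/
def Splits (x a b : ℕ) : Prop := (a ≤ x ∧ x < b) ∨ (b ≤ x ∧ x < a)

/-- `m ∈ Γ_j^{(k)}(w)`, where the word `w` is accessed with 1-based indices:
`j - k ∈ Γ_j^{(k)}(w)` when `w j` splits the pair `w (j-k), w (j-k+1)`, and for
`i ∈ Γ_j^{(k)}(w)`, also `i - k ∈ Γ_j^{(k)}(w)` when exactly one of `w i`, `w (i+1)`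
splits the pair `w (i-k), w (i-k+1)`. -/
def MemGamma (k : ℕ) (w : ℕ → ℕ) (j m : ℕ) : Prop :=
  1 ≤ m ∧ ∃ t : ℕ, m + (t + 1) * k = j ∧
    Splits (w j) (w (j - k)) (w (j - k + 1)) ∧
    ∀ s, 1 ≤ s → s ≤ t →
      Xor' (Splits (w (m + s * k)) (w (m + (s - 1) * k)) (w (m + (s - 1) * k + 1)))
           (Splits (w (m + s * k + 1)) (w (m + (s - 1) * k)) (w (m + (s - 1) * k + 1)))

/-- The map `γ_j^{(k)}`: interchange `w i` and `w (i+1)` for every `i ∈ Γ_j^{(k)}(w)`. -/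
noncomputable def gamW (k j : ℕ) (w : ℕ → ℕ) : ℕ → ℕ := fun p =>
  if MemGamma k w j p then w (p + 1)
  else if MemGamma k w j (p - 1) then w (p - 1)
  else w p

noncomputable def phiAux (k : ℕ) (w : ℕ → ℕ) : ℕ → ℕ → ℕ
  | 0 => w
  | j + 1 => gamW k (j + 1) (phiAux k w j)

/-- `φ^{(k)} = γ_n^{(k)} ∘ γ_{n-1}^{(k)} ∘ ⋯ ∘ γ_1^{(k)}` on words of length `n`. -/
noncomputable def phiW (k n : ℕ) (w : ℕ → ℕ) : ℕ → ℕ := phiAux k w n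

/-- 1-based access to the letters of a list word. -/
def wf (l : List ℕ) (i : ℕ) : ℕ := l.getD (i - 1) 0

/-- `φ^{(k)}` as an operation on list words. -/
noncomputable def phiL (k : ℕ) (l : List ℕ) : List ℕ :=
  List.ofFn (fun i : Fin l.length => phiW k l.length (wf l) (i.1 + 1))

/-- The `k`-descent set `Des_k(w) = {(i, i+k) : w i > w (i+k)}` of a word of length `n`,
recorded by its set of first components. -/
def DesKF (k n : ℕ) (w : ℕ → ℕ) : Finset ℕ :=
  (Finset.Icc 1 n).filter fun i => i + k ≤ n ∧ w (i + k) < w i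

/-- The `k`-inversion set `Inv_k(w) = {(i, j) : 0 < j - i < k and w i > w j}`. -/
def InvKF (k n : ℕ) (w : ℕ → ℕ) : Finset (ℕ × ℕ) :=
  ((Finset.Icc 1 n) ×ˢ (Finset.Icc 1 n)).filter fun p =>
    p.1 < p.2 ∧ p.2 - p.1 < k ∧ w p.2 < w p.1

/-- The `k`-major index `maj_k(w) = |Inv_k(w)| + Σ_{(i,i+k) ∈ Des_k(w)} i`. -/
def majKF (k n : ℕ) (w : ℕ → ℕ) : ℕ := (InvKF k n w).card + ∑ i ∈ DesKF k n w, i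

/-- The `k`-major index of a list word. -/
def majKL (k : ℕ) (l : List ℕ) : ℕ := majKF k l.length (wf l)

/-- The ordinary major index of a list word: the sum of the indices `i` with
`w i > w (i+1)`. -/
def majL (l : List ℕ) : ℕ :=
  ∑ i ∈ (Finset.Icc 1 l.length).filter (fun i => i + 1 ≤ l.length ∧ wf l (i + 1) < wf l i), i

/-- The ordinary inversion number of a list word: the number of pairs `i < j` with
`w i > w j`. -/
def invL (l : List ℕ) : ℕ :=
  (((Finset.Icc 1 l.length) ×ˢ (Finset.Icc 1 l.length)).filter fun p =>
    p.1 < p.2 ∧ wf l p.2 < wf l p.1).card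

/-- For every integer `k ≥ 2` and every word `w`,
`maj_{k-1}(w) = maj_k(φ^{(k)}(w))`. -/
def Cc (k : ℕ) (w : ℕ → ℕ) (j : ℕ) : ℕ :=
  ((Finset.Ioo (j - k) j).filter (fun i => w j < w i)).card +
    (if k < j ∧ w j < w (j - k) then j - k else 0)

def mIdx (k n t : ℕ) : ℕ := n - (t+1)*k

def XC (k n : ℕ) (u : ℕ → ℕ) (r : ℕ) : Prop :=
  Xor' (Splits (u (mIdx k n (r-1))) (u (mIdx k n r)) (u (mIdx k n r + 1)))
       (Splits (u (mIdx k n (r-1) + 1)) (u (mIdx k n r)) (u (mIdx k n r + 1)))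

def ChainOK (k n : ℕ) (u : ℕ → ℕ) (t : ℕ) : Prop :=
  (t+1)*k + 1 ≤ n ∧ ∀ r, 1 ≤ r → r ≤ t → XC k n u r

lemma mIdx_step (k n t : ℕ) : mIdx k n (t+1) = mIdx k n t - k := by
  rw [mIdx, mIdx]
  have h : (t+1+1)*k = (t+1)*k + k := by ring
  omega

lemma mIdx_diff (k n : ℕ) {s t : ℕ} (hst : s ≤ t) (h : (t+1)*k + 1 ≤ n) :
    mIdx k n s = mIdx k n t + (t-s)*k := by
  rw [mIdx, mIdx]
  have h1 : (t+1)*k = (s+1)*k + (t-s)*k := by rw [← add_mul]; congr 1; omega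
  omega

lemma chainOK_mono {k n : ℕ} {u : ℕ → ℕ} {s t : ℕ} (h : ChainOK k n u t) (hst : s ≤ t) :
    ChainOK k n u s := by
  obtain ⟨h1, h2⟩ := h
  constructor
  · have : (s+1)*k ≤ (t+1)*k := Nat.mul_le_mul_right k (by omega)
    omega
  · intro r hr1 hr2; exact h2 r hr1 (by omega)

lemma memGamma_iff {k n : ℕ} {u : ℕ → ℕ} (hbase : Splits (u n) (u (n-k)) (u (n-k+1))) (m : ℕ) :
    MemGamma k u n m ↔ ∃ t, ChainOK k n u t ∧ m = mIdx k n t := by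
  constructor
  · rintro ⟨hm1, t, hmt, hsp, hxor⟩
    have hkt : k ≤ (t+1)*k := Nat.le_mul_of_pos_left k (by omega)
    refine ⟨t, ⟨by omega, ?_⟩, by rw [mIdx]; omega⟩
    intro r hr1 hrt
    have hs1 : 1 ≤ t+1-r := by omega
    have hst : t+1-r ≤ t := by omega
    have hcollapse : (t+1-r)*k + r*k = (t+1)*k := by rw [← add_mul]; congr 1; omega
    have hcollapse2 : (t+1-r-1)*k + (r+1)*k = (t+1)*k := by rw [← add_mul]; congr 1; omega
    have e1 : mIdx k n (r-1) = m + (t+1-r)*k := by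
      rw [mIdx]
      have : (r-1+1)*k = r*k := by congr 1; omega
      omega
    have e2 : mIdx k n r = m + (t+1-r-1)*k := by
      rw [mIdx]; omega
    rw [XC, e1, e2]
    exact hxor (t+1-r) hs1 hst
  · rintro ⟨t, ⟨hle, hX⟩, rfl⟩
    have hkt : k ≤ (t+1)*k := Nat.le_mul_of_pos_left k (by omega)
    refine ⟨by rw [mIdx]; omega, t, by rw [mIdx]; omega, ?_, ?_⟩
    · have e : mIdx k n t + (t+1)*k = n := by rw [mIdx]; omega
      exact hbase
    · intro s hs1 hst
      have hXr := hX (t+1-s) (by omega) (by omega)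
      have hcollapse : (t+1-s)*k + s*k = (t+1)*k := by rw [← add_mul]; congr 1; omega
      have hcollapse2 : (t-s)*k + (s+1)*k = (t+1)*k := by rw [← add_mul]; congr 1; omega
      have e1 : mIdx k n (t+1-s-1) = mIdx k n t + s*k := by
        rw [mIdx, mIdx]
        have : (t+1-s-1+1)*k = (t+1-s)*k := by congr 1; omega
        omega
      have e2 : mIdx k n (t+1-s) = mIdx k n t + (s-1)*k := by
        rw [mIdx, mIdx]
        have h3 : (t+1-s+1)*k + (s-1)*k = (t+1)*k := by rw [← add_mul]; congr 1; omega
        omega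
      rw [XC, e1, e2] at hXr
      exact hXr
/-- integer indicator of `y < x`, i.e. `[x > y]` -/
def II (x y : ℕ) : ℤ := if y < x then 1 else 0

lemma lemE {A B A' B' : ℕ} (h : Xor' (Splits A A' B') (Splits B A' B')) :
    II A' B + II A' A + II B' A' = II B' A + II B' B + II A' B' := by
  rcases h with ⟨h1, h2⟩ | ⟨h1, h2⟩ <;>
  · rw [Splits] at h1 h2; push_neg at h2
    rw [II, II, II, II, II, II]
    split_ifs <;> omega

lemma lemStop {A B A' B' : ℕ} (h : ¬ Xor' (Splits A A' B') (Splits B A' B')) :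
    II A' B + II B' A = II A' A + II B' B := by
  rw [Xor', Xor] at h; push_neg at h
  have hiff : Splits A A' B' ↔ Splits B A' B' := by tauto
  rw [Splits, Splits] at hiff
  rw [II, II, II, II]
  split_ifs <;> omega

lemma lemBase {Z A B : ℕ} (h : Splits Z A B) : II A Z + II B A = II B Z + II A B := by
  rw [Splits] at h
  rw [II, II, II, II]
  split_ifs <;> omega

lemma Ioo_eq_insert_left {a b : ℕ} (h : a + 1 < b) :
    Finset.Ioo a b = insert (a+1) (Finset.Ioo (a+1) b) := by
  ext x; simp only [Finset.mem_Ioo, Finset.mem_insert]; omega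

lemma Ioo_eq_insert_right {a b : ℕ} (h : a < b) :
    Finset.Ioo a (b+1) = insert b (Finset.Ioo a b) := by
  ext x; simp only [Finset.mem_Ioo, Finset.mem_insert]; omega

lemma cardfi {x : ℕ} {s : Finset ℕ} (hx : x ∉ s) (p : ℕ → Prop) :
    (((insert x s).filter p).card : ℤ) = (if p x then 1 else 0) + (s.filter p).card := by
  rw [Finset.filter_insert]
  split_ifs with h
  · rw [Finset.card_insert_of_notMem (fun hc => hx (Finset.mem_filter.1 hc).1)]
    push_cast; ring
  · simp

lemma card_swap_window (v u : ℕ → ℕ) (π : ℕ → ℕ) (s : Finset ℕ)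
    (hmap : ∀ i ∈ s, π i ∈ s) (hinv : ∀ i ∈ s, π (π i) = i)
    (hval : ∀ i ∈ s, v i = u (π i)) (c : ℕ) :
    (s.filter (fun i => c < v i)).card = (s.filter (fun i => c < u i)).card := by
  apply Finset.card_nbij' (i := π) (j := π)
  · intro a ha
    simp only [Finset.mem_coe, Finset.mem_filter] at ha ⊢
    exact ⟨hmap a ha.1, by rw [← hval a ha.1]; exact ha.2⟩
  · intro a ha
    simp only [Finset.mem_coe, Finset.mem_filter] at ha ⊢
    refine ⟨hmap a ha.1, ?_⟩
    rw [hval (π a) (hmap a ha.1), hinv a ha.1]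
    exact ha.2
  · intro a ha
    exact hinv a (Finset.mem_filter.1 ha).1
  · intro a ha
    exact hinv a (Finset.mem_filter.1 ha).1

lemma Cc_eval_deep {k : ℕ} (hk : 2 ≤ k) (w : ℕ → ℕ) {M m' : ℕ} (hm : m' + k = M) :
    (Cc k w M : ℤ) = II (w (m'+1)) (w M)
      + ((Finset.Ioo (m'+1) M).filter (fun i => w M < w i)).card
      + m' * II (w m') (w M) := by
  have h1 : M - k = m' := by omega
  have hnm : (m'+1) ∉ Finset.Ioo (m'+1) M := by simp
  have h4 : (if k < M ∧ w M < w m' then m' else 0) = m' * (if w M < w m' then 1 else 0) := by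
    split_ifs <;> omega
  rw [Cc, h1, h4, Ioo_eq_insert_left (show m'+1 < M by omega), Finset.filter_insert, II, II]
  by_cases h2 : w M < w (m'+1)
  · rw [if_pos h2, if_pos h2,
      Finset.card_insert_of_notMem (fun hc => hnm (Finset.mem_filter.1 hc).1)]
    by_cases h3 : w M < w m' <;> simp [h3] <;> push_cast <;> ring
  · rw [if_neg h2, if_neg h2]
    by_cases h3 : w M < w m' <;> simp [h3] <;> push_cast <;> ring

lemma Cc_eval_deep_plus {k : ℕ} (hk : 2 ≤ k) (w : ℕ → ℕ) {M m' : ℕ} (hm : m' + k = M) :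
    (Cc k w (M+1) : ℤ) = II (w M) (w (M+1))
      + ((Finset.Ioo (m'+1) M).filter (fun i => w (M+1) < w i)).card
      + (m'+1) * II (w (m'+1)) (w (M+1)) := by
  have h1 : M + 1 - k = m' + 1 := by omega
  have hnm : M ∉ Finset.Ioo (m'+1) M := by simp
  have h4 : (if k < M + 1 ∧ w (M+1) < w (m'+1) then m' + 1 else 0)
      = (m'+1) * (if w (M+1) < w (m'+1) then 1 else 0) := by
    split_ifs <;> omega
  rw [Cc, h1, h4, Ioo_eq_insert_right (show m'+1 < M by omega), Finset.filter_insert, II, II]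
  by_cases h2 : w (M+1) < w M
  · rw [if_pos h2, if_pos h2,
      Finset.card_insert_of_notMem (fun hc => hnm (Finset.mem_filter.1 hc).1)]
    by_cases h3 : w (M+1) < w (m'+1) <;> simp [h3] <;> push_cast <;> ring
  · rw [if_neg h2, if_neg h2]
    by_cases h3 : w (M+1) < w (m'+1) <;> simp [h3] <;> push_cast <;> ring

lemma Cc_eval_shallow {k : ℕ} (hk : 2 ≤ k) (w : ℕ → ℕ) {M : ℕ} (hMk : M < k) :
    (Cc k w M : ℤ) = ((Finset.Ioo 0 M).filter (fun i => w M < w i)).card := by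
  have h1 : M - k = 0 := by omega
  rw [Cc, h1, if_neg (by rintro ⟨h, -⟩; omega)]
  push_cast; ring

lemma Cc_eval_shallow_plus {k : ℕ} (hk : 2 ≤ k) (w : ℕ → ℕ) {M : ℕ} (hM1 : 1 ≤ M) (hMk : M < k) :
    (Cc k w (M+1) : ℤ) = II (w M) (w (M+1))
      + ((Finset.Ioo 0 M).filter (fun i => w (M+1) < w i)).card := by
  have h1 : M + 1 - k = 0 := by omega
  have hnm : M ∉ Finset.Ioo 0 M := by simp
  rw [Cc, h1, if_neg (by rintro ⟨h, -⟩; omega),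
    Ioo_eq_insert_right (show 0 < M by omega), Finset.filter_insert, II]
  by_cases h2 : w (M+1) < w M
  · rw [if_pos h2, if_pos h2,
      Finset.card_insert_of_notMem (fun hc => hnm (Finset.mem_filter.1 hc).1)]
    push_cast; ring
  · rw [if_neg h2, if_neg h2]; push_cast; ring

lemma Cc_eval_topk1 {k : ℕ} (hk : 2 ≤ k) (w : ℕ → ℕ) {n m0 : ℕ} (hm : m0 + k = n) :
    (Cc (k-1) w n : ℤ) = ((Finset.Ioo (m0+1) n).filter (fun i => w n < w i)).card
      + (m0+1) * II (w (m0+1)) (w n) := by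
  have h1 : n - (k-1) = m0 + 1 := by omega
  have h4 : (if k - 1 < n ∧ w n < w (m0+1) then m0 + 1 else 0)
      = (m0+1) * (if w n < w (m0+1) then 1 else 0) := by
    split_ifs <;> omega
  rw [Cc, h1, h4, II]
  by_cases h2 : w n < w (m0+1) <;> simp [h2] <;> push_cast <;> ring

lemma lemL (k n : ℕ) (hk : 2 ≤ k) (u : ℕ → ℕ) :
    ∑ j ∈ Finset.Icc 1 n, Cc k (gamW k n u) j
      = ∑ j ∈ Finset.Icc 1 (n-1), Cc k u j + Cc (k-1) u n := by
  by_cases hbig : k + 1 ≤ n ∧ Splits (u n) (u (n-k)) (u (n-k+1))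
  case neg =>
    -- trivial case : no swaps at all
    have hnomem : ∀ m, ¬ MemGamma k u n m := by
      rintro m ⟨hm1, t, hmt, hsp, -⟩
      have hkt : k ≤ (t+1)*k := Nat.le_mul_of_pos_left k (by omega)
      exact hbig ⟨by omega, hsp⟩
    have hveq : ∀ p, gamW k n u p = u p := by
      intro p; rw [gamW, if_neg (hnomem p), if_neg (hnomem (p-1))]
    have hsum : ∀ j, Cc k (gamW k n u) j = Cc k u j := by
      intro j; rw [Cc, Cc]
      simp only [hveq]
    rw [Finset.sum_congr rfl (fun j _ => hsum j)]
    rcases Nat.eq_zero_or_pos n with hn0 | hn1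
    · subst hn0
      have h0 : Cc (k-1) u 0 = 0 := by
        rw [Cc]
        have h1 : (0:ℕ) - (k-1) = 0 := by omega
        rw [h1]
        simp
      rw [h0]
      norm_num
    · have hsplit : Finset.Icc 1 n = insert n (Finset.Icc 1 (n-1)) := by
        ext x; simp only [Finset.mem_Icc, Finset.mem_insert]; omega
      have hnotmem : n ∉ Finset.Icc 1 (n-1) := by simp only [Finset.mem_Icc]; omega
      rw [hsplit, Finset.sum_insert hnotmem]
      have hCC : Cc k u n = Cc (k-1) u n := by
        rcases lt_trichotomy n k with hlt | heq | hgt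
        · -- n ≤ k - 1
          rw [Cc, Cc]
          have e1 : n - k = 0 := by omega
          have e2 : n - (k-1) = 0 := by omega
          rw [e1, e2, if_neg (by rintro ⟨h, -⟩; omega), if_neg (by rintro ⟨h, -⟩; omega)]
        · -- n = k
          subst heq
          rw [Cc, Cc]
          have e1 : n - n = 0 := by omega
          have e2 : n - (n-1) = 0+1 := by omega
          have hnm : (0:ℕ)+1 ∉ Finset.Ioo (0+1) n := by simp
          rw [e1, e2, if_neg (show ¬(n < n ∧ u n < u 0) from by rintro ⟨h, -⟩; omega)]
          rw [Ioo_eq_insert_left (show (0:ℕ)+1 < n by omega), Finset.filter_insert]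
          by_cases h2 : u n < u (0+1)
          · rw [if_pos h2, Finset.card_insert_of_notMem (fun hc => hnm (Finset.mem_filter.1 hc).1),
              if_pos (show n-1 < n ∧ u n < u (0+1) from ⟨by omega, h2⟩)]
            all_goals omega
          · rw [if_neg h2, if_neg (show ¬(n-1 < n ∧ u n < u (0+1)) from by rintro ⟨-, h⟩; exact h2 h)]
            all_goals omega
        · -- n ≥ k+1 and ¬ Splits
          have hnsp : ¬ Splits (u n) (u (n-k)) (u (n-k+1)) := fun h => hbig ⟨by omega, h⟩
          rw [Splits] at hnsp
          rw [Cc, Cc]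
          have e2 : n - (k-1) = n - k + 1 := by omega
          rw [e2, Ioo_eq_insert_left (show n-k+1 < n by omega), Finset.filter_insert]
          have hnm : n-k+1 ∉ Finset.Ioo (n-k+1) n := by simp
          by_cases h2 : u n < u (n-k+1)
          · rw [if_pos h2, Finset.card_insert_of_notMem (fun hc => hnm (Finset.mem_filter.1 hc).1)]
            have h3 : u n < u (n-k) := by omega
            rw [if_pos ⟨by omega, h3⟩, if_pos ⟨by omega, h2⟩]
            omega
          · rw [if_neg h2]
            have h3 : ¬ u n < u (n-k) := by omega
            rw [if_neg (by rintro ⟨-, h⟩; exact h3 h), if_neg (by rintro ⟨-, h⟩; exact h2 h)]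
      omega
  case pos =>
    obtain ⟨hn, hbase⟩ := hbig
    set T := Nat.findGreatest (ChainOK k n u) n with hTdef
    have hC0 : ChainOK k n u 0 := by
      refine ⟨?_, fun r h1 h2 => by omega⟩
      have : (0+1)*k = k := by ring
      omega
    have hCT : ChainOK k n u T := Nat.findGreatest_spec (Nat.zero_le n) hC0
    have hmax : ∀ t, ChainOK k n u t → t ≤ T := by
      intro t ht
      have h1 : t+1 ≤ (t+1)*k := Nat.le_mul_of_pos_right (t+1) (by omega)
      have h2 := ht.1
      exact Nat.le_findGreatest (by omega) ht
    have hstop : ¬ ChainOK k n u (T+1) := fun h => by have := hmax _ h; omega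
    have hexact : ∀ t, t ≤ T → mIdx k n t + (t+1)*k = n := by
      intro t ht
      have := (chainOK_mono hCT ht).1
      rw [mIdx]; omega
    have hkt1 : ∀ t : ℕ, k ≤ (t+1)*k := fun t => Nat.le_mul_of_pos_left k (by omega)
    have hpos : ∀ t, t ≤ T → 1 ≤ mIdx k n t := by
      intro t ht
      have h1 := hexact t ht
      have h2 := hkt1 t
      have h3 := (chainOK_mono hCT ht).1
      omega
    have hdiff : ∀ s t, s ≤ t → t ≤ T → mIdx k n s = mIdx k n t + (t-s)*k :=
      fun s t hst ht => mIdx_diff k n hst (chainOK_mono hCT ht).1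
    have hsep : ∀ s t, s < t → t ≤ T → mIdx k n t + k ≤ mIdx k n s := by
      intro s t hst ht
      have h1 := hdiff s t (le_of_lt hst) ht
      have h2 : k ≤ (t-s)*k := Nat.le_mul_of_pos_left k (by omega)
      omega
    have hmono : ∀ s t, s ≤ t → t ≤ T → mIdx k n t ≤ mIdx k n s := by
      intro s t hst ht; have := hdiff s t hst ht; omega
    have hmemA : ∀ p, MemGamma k u n p ↔ ∃ t ≤ T, p = mIdx k n t := by
      intro p; rw [memGamma_iff hbase]
      constructor
      · rintro ⟨t, hC, rfl⟩; exact ⟨t, hmax t hC, rfl⟩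
      · rintro ⟨t, htT, rfl⟩; exact ⟨t, chainOK_mono hCT htT, rfl⟩
    have hmemB : ∀ p, MemGamma k u n (p-1) ↔ ∃ t ≤ T, p = mIdx k n t + 1 := by
      intro p; rw [hmemA (p-1)]
      constructor
      · rintro ⟨t, htT, he⟩
        have := hpos t htT
        exact ⟨t, htT, by omega⟩
      · rintro ⟨t, htT, rfl⟩
        exact ⟨t, htT, by omega⟩
    have hABne : ∀ s t, s ≤ T → t ≤ T → mIdx k n s ≠ mIdx k n t + 1 := by
      intro s t hs ht
      rcases lt_trichotomy s t with h|h|h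
      · have := hsep s t h ht; omega
      · subst h; omega
      · have := hsep t s h hs; omega
    set v := gamW k n u with hv
    have hvA : ∀ t, t ≤ T → v (mIdx k n t) = u (mIdx k n t + 1) := by
      intro t ht
      show (if MemGamma k u n (mIdx k n t) then _ else _) = _
      rw [if_pos ((hmemA _).2 ⟨t, ht, rfl⟩)]
    have hvB : ∀ t, t ≤ T → v (mIdx k n t + 1) = u (mIdx k n t) := by
      intro t ht
      have hnotA : ¬ MemGamma k u n (mIdx k n t + 1) := by
        intro h
        obtain ⟨s, hs, he⟩ := (hmemA _).1 h
        exact hABne s t hs ht he.symm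
      show (if MemGamma k u n (mIdx k n t + 1) then _ else _) = _
      rw [if_neg hnotA, if_pos ((hmemB (mIdx k n t + 1)).2 ⟨t, ht, rfl⟩)]
      have he : mIdx k n t + 1 - 1 = mIdx k n t := by omega
      rw [he]
    have hvU : ∀ p, (∀ t, t ≤ T → p ≠ mIdx k n t ∧ p ≠ mIdx k n t + 1) → v p = u p := by
      intro p hp
      show (if MemGamma k u n p then _ else _) = _
      rw [if_neg, if_neg]
      · intro h
        obtain ⟨t, ht, he⟩ := (hmemB p).1 h
        exact (hp t ht).2 he
      · intro h
        obtain ⟨t, ht, he⟩ := (hmemA p).1 h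
        exact (hp t ht).1 he
    have hvn : v n = u n := by
      apply hvU
      intro t ht
      have h1 := hexact t ht
      have h2 := hkt1 t
      omega
    -- the involution π
    set π : ℕ → ℕ := fun i =>
      if ∃ t ≤ T, i = mIdx k n t then i + 1
      else if ∃ t ≤ T, i = mIdx k n t + 1 then i - 1 else i with hπ
    have hπA : ∀ i, (∃ t ≤ T, i = mIdx k n t) → π i = i + 1 := by
      intro i h; simp only [hπ]; rw [if_pos h]
    have hπB : ∀ i, (∃ t ≤ T, i = mIdx k n t + 1) → π i = i - 1 := by
      intro i h
      simp only [hπ]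
      rw [if_neg, if_pos h]
      rintro ⟨s, hs, rfl⟩
      obtain ⟨t, ht, he⟩ := h
      exact hABne s t hs ht he
    have hπU : ∀ i, ¬(∃ t ≤ T, i = mIdx k n t) → ¬(∃ t ≤ T, i = mIdx k n t + 1) → π i = i := by
      intro i h1 h2; simp only [hπ]; rw [if_neg h1, if_neg h2]
    have hvπ : ∀ i, v i = u (π i) := by
      intro i
      by_cases hA : ∃ t ≤ T, i = mIdx k n t
      · obtain ⟨t, ht, rfl⟩ := hA
        rw [hπA _ ⟨t, ht, rfl⟩]
        exact hvA t ht
      · by_cases hB : ∃ t ≤ T, i = mIdx k n t + 1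
        · obtain ⟨t, ht, rfl⟩ := hB
          rw [hπB _ ⟨t, ht, rfl⟩]
          have he : mIdx k n t + 1 - 1 = mIdx k n t := by omega
          rw [he]
          exact hvB t ht
        · rw [hπU i hA hB]
          apply hvU
          intro t ht
          constructor
          · intro he; exact hA ⟨t, ht, he⟩
          · intro he; exact hB ⟨t, ht, he⟩
    have hππ : ∀ i, π (π i) = i := by
      intro i
      by_cases hA : ∃ t ≤ T, i = mIdx k n t
      · obtain ⟨t, ht, rfl⟩ := hA
        rw [hπA _ ⟨t, ht, rfl⟩, hπB _ ⟨t, ht, rfl⟩]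
        omega
      · by_cases hB : ∃ t ≤ T, i = mIdx k n t + 1
        · obtain ⟨t, ht, rfl⟩ := hB
          rw [hπB _ ⟨t, ht, rfl⟩]
          have he : mIdx k n t + 1 - 1 = mIdx k n t := by omega
          rw [he, hπA _ ⟨t, ht, rfl⟩]
        · rw [hπU i hA hB, hπU i hA hB]
    -- the set of swapped positions
    set PS : Finset ℕ := (Finset.range (T+1)).biUnion
      (fun t => {mIdx k n t, mIdx k n t + 1}) with hPS
    have hPSmem : ∀ p, p ∈ PS ↔ ∃ t ≤ T, p = mIdx k n t ∨ p = mIdx k n t + 1 := by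
      intro p
      simp only [hPS, Finset.mem_biUnion, Finset.mem_range, Finset.mem_insert,
        Finset.mem_singleton]
      constructor
      · rintro ⟨t, ht, h⟩; exact ⟨t, by omega, h⟩
      · rintro ⟨t, ht, h⟩; exact ⟨t, by omega, h⟩
    have hsub : PS ⊆ Finset.Icc 1 (n-1) := by
      intro p hp
      obtain ⟨t, ht, hor⟩ := (hPSmem p).1 hp
      have h1 := hpos t ht
      have h2 := hexact t ht
      have h3 := hkt1 t
      simp only [Finset.mem_Icc]
      omega
    -- the rest positions are unchanged
    have hrest : ∀ j ∈ Finset.Icc 1 (n-1) \ PS, Cc k v j = Cc k u j := by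
      intro j hj
      rw [Finset.mem_sdiff, Finset.mem_Icc] at hj
      obtain ⟨⟨hj1, hj2⟩, hjP⟩ := hj
      have hjp : ∀ t, t ≤ T → j ≠ mIdx k n t ∧ j ≠ mIdx k n t + 1 := by
        intro t ht
        constructor <;> intro he <;> exact hjP ((hPSmem j).2 ⟨t, ht, by tauto⟩)
      have hvj : v j = u j := hvU j hjp
      have hjk1 : ∀ s, s ≤ T → j - k ≠ mIdx k n s := by
        intro s hs he
        have h1 := hpos s hs
        rcases Nat.eq_zero_or_pos s with rfl | hs1
        · have h2 := hexact 0 (by omega)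
          have h3 : (0+1)*k = k := by ring
          omega
        · have hd := hdiff (s-1) s (by omega) hs
          have h3 : (s - (s-1)) * k = k := by
            rw [show s - (s-1) = 1 by omega, one_mul]
          exact (hjp (s-1) (by omega)).1 (by omega)
      have hjk2 : ∀ s, s ≤ T → j - k ≠ mIdx k n s + 1 := by
        intro s hs he
        have h1 := hpos s hs
        rcases Nat.eq_zero_or_pos s with rfl | hs1
        · have h2 := hexact 0 (by omega)
          have h3 : (0+1)*k = k := by ring
          omega
        · have hd := hdiff (s-1) s (by omega) hs
          have h3 : (s - (s-1)) * k = k := by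
            rw [show s - (s-1) = 1 by omega, one_mul]
          exact (hjp (s-1) (by omega)).2 (by omega)
      have hvjk : v (j-k) = u (j-k) := by
        apply hvU
        intro s hs
        exact ⟨hjk1 s hs, hjk2 s hs⟩
      have hmapw : ∀ i ∈ Finset.Ioo (j-k) j, π i ∈ Finset.Ioo (j-k) j := ?_
      case _ =>
        rw [Cc, Cc]
        simp only [hvj, hvjk]
        rw [card_swap_window v u π _ hmapw (fun i _ => hππ i) (fun i _ => hvπ i)]
      intro i hi
      rw [Finset.mem_Ioo] at hi ⊢
      by_cases hA : ∃ t ≤ T, i = mIdx k n t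
      · rw [hπA _ hA]
        obtain ⟨t, ht, rfl⟩ := hA
        have hne : mIdx k n t + 1 ≠ j := fun he => (hjp t ht).2 he.symm
        omega
      · by_cases hB : ∃ t ≤ T, i = mIdx k n t + 1
        · rw [hπB _ hB]
          obtain ⟨t, ht, rfl⟩ := hB
          have h1 := hpos t ht
          have hne : mIdx k n t ≠ j - k := fun he => hjk1 t ht he.symm
          omega
        · rw [hπU i hA hB]; exact hi
    -- sum over the pair set
    have hdisj : (↑(Finset.range (T+1)) : Set ℕ).PairwiseDisjoint
        (fun t => ({mIdx k n t, mIdx k n t + 1} : Finset ℕ)) := by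
      intro s hs t ht hst
      simp only [Finset.coe_range, Set.mem_Iio] at hs ht
      refine Finset.disjoint_left.2 ?_
      intro a ha hb
      simp only [Finset.mem_insert, Finset.mem_singleton] at ha hb
      rcases lt_or_gt_of_ne hst with h | h
      · have := hsep s t h (by omega); omega
      · have := hsep t s h (by omega); omega
    have hps : ∀ f : ℕ → ℕ, ∑ p ∈ PS, f p
        = ∑ t ∈ Finset.range (T+1), (f (mIdx k n t) + f (mIdx k n t + 1)) := by
      intro f
      rw [hPS, Finset.sum_biUnion hdisj]
      refine Finset.sum_congr rfl ?_
      intro t ht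
      rw [Finset.sum_pair (by omega)]
    -- reduce the goal
    have hsplit : Finset.Icc 1 n = insert n (Finset.Icc 1 (n-1)) := by
      ext x; simp only [Finset.mem_Icc, Finset.mem_insert]; omega
    have hnotmem : n ∉ Finset.Icc 1 (n-1) := by simp only [Finset.mem_Icc]; omega
    rw [hsplit, Finset.sum_insert hnotmem]
    rw [← Finset.sum_sdiff hsub (f := Cc k v), ← Finset.sum_sdiff hsub (f := Cc k u)]
    rw [Finset.sum_congr rfl hrest]
    have hz : (Cc k v n : ℤ) + ∑ p ∈ PS, (Cc k v p : ℤ)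
        = (Cc (k-1) u n : ℤ) + ∑ p ∈ PS, (Cc k u p : ℤ) := by
      have hpsZ : ∀ f : ℕ → ℕ, (∑ p ∈ PS, (f p : ℤ))
          = ∑ t ∈ Finset.range (T+1), ((f (mIdx k n t) : ℤ) + (f (mIdx k n t + 1) : ℤ)) := by
        intro f
        have h1 := hps f
        have h2 : ((∑ p ∈ PS, f p : ℕ) : ℤ)
            = ((∑ t ∈ Finset.range (T+1), (f (mIdx k n t) + f (mIdx k n t + 1)) : ℕ) : ℤ) := by
          exact_mod_cast congrArg (fun x : ℕ => (x : ℤ)) h1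
        push_cast at h2
        exact h2
      set sg : ℕ → ℤ := fun s =>
        if s ≤ T then II (u (mIdx k n s + 1)) (u (mIdx k n s))
          - II (u (mIdx k n s)) (u (mIdx k n s + 1)) else 0 with hsg
      have hsgle : ∀ s, s ≤ T → sg s = II (u (mIdx k n s + 1)) (u (mIdx k n s))
          - II (u (mIdx k n s)) (u (mIdx k n s + 1)) := by
        intro s hs; simp only [hsg]; rw [if_pos hs]
      have hsggt : ∀ s, T < s → sg s = 0 := by
        intro s hs; simp only [hsg]; rw [if_neg (by omega)]
      have hδ : ∀ t ∈ Finset.range (T+1),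
          (Cc k v (mIdx k n t) : ℤ) + (Cc k v (mIdx k n t + 1) : ℤ)
          = ((Cc k u (mIdx k n t) : ℤ) + (Cc k u (mIdx k n t + 1) : ℤ)) + (sg t - sg (t+1)) := by
        intro t ht
        rw [Finset.mem_range] at ht
        have htT : t ≤ T := by omega
        have hvM : v (mIdx k n t) = u (mIdx k n t + 1) := hvA t htT
        have hvM1 : v (mIdx k n t + 1) = u (mIdx k n t) := hvB t htT
        have hsgt := hsgle t htT
        by_cases hdeep : k ≤ mIdx k n t
        · -- deep case
          have hstep := mIdx_step k n t
          have hm : mIdx k n (t+1) + k = mIdx k n t := by omega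
          have hcore : ∀ i ∈ Finset.Ioo (mIdx k n (t+1) + 1) (mIdx k n t), v i = u i := by
            intro i hi
            rw [Finset.mem_Ioo] at hi
            apply hvU
            intro s hs
            rcases le_or_gt s t with h|h
            · have := hmono s t h htT; omega
            · have := hmono (t+1) s h hs; omega
          have hfc : ∀ c : ℕ,
              ((Finset.Ioo (mIdx k n (t+1) + 1) (mIdx k n t)).filter (fun i => c < v i)).card
              = ((Finset.Ioo (mIdx k n (t+1) + 1) (mIdx k n t)).filter (fun i => c < u i)).card := by
            intro c
            refine congrArg Finset.card (Finset.filter_congr ?_)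
            intro i hi
            rw [hcore i hi]
          rw [Cc_eval_deep hk v hm, Cc_eval_deep_plus hk v hm,
            Cc_eval_deep hk u hm, Cc_eval_deep_plus hk u hm]
          simp only [hvM, hvM1]
          rw [hfc (u (mIdx k n t + 1)), hfc (u (mIdx k n t))]
          rcases eq_or_lt_of_le htT with heq | hlt
          · -- t = T : bottom of the chain
            have hMle : ∀ s, s ≤ T → mIdx k n t ≤ mIdx k n s := fun s hs =>
              hmono s t (by omega) htT
            have hv1 : v (mIdx k n (t+1)) = u (mIdx k n (t+1)) := by
              apply hvU; intro s hs; have := hMle s hs; omega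
            have hv2 : v (mIdx k n (t+1) + 1) = u (mIdx k n (t+1) + 1) := by
              apply hvU; intro s hs; have := hMle s hs; omega
            rw [hv1, hv2, hsgt, hsggt (t+1) (by omega)]
            rcases Nat.eq_zero_or_pos (mIdx k n (t+1)) with hm0 | hm1
            · rw [hm0]
              push_cast
              ring
            · have hXn : ¬ XC k n u (t+1) := by
                intro hX
                apply hstop
                have hmm : 1 ≤ mIdx k n (t+1) := hm1
                rw [mIdx] at hmm
                constructor
                · have heq2 : (T+1+1)*k = (t+1+1)*k := by rw [heq]
                  omega
                · intro r h1 h2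
                  rcases eq_or_lt_of_le h2 with h3 | h3
                  · rw [h3, ← heq]
                    exact hX
                  · exact hCT.2 r h1 (by omega)
              have hstopE := lemStop (A := u (mIdx k n t)) (B := u (mIdx k n t + 1))
                (A' := u (mIdx k n (t+1))) (B' := u (mIdx k n (t+1) + 1)) hXn
              have hmul := congrArg (fun z : ℤ => (mIdx k n (t+1) : ℤ) * z) hstopE
              simp only [mul_add] at hmul
              linarith
          · -- t < T : middle of the chain
            have hv1 : v (mIdx k n (t+1)) = u (mIdx k n (t+1) + 1) := hvA (t+1) (by omega)
            have hv2 : v (mIdx k n (t+1) + 1) = u (mIdx k n (t+1)) := hvB (t+1) (by omega)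
            rw [hv1, hv2, hsgt, hsgle (t+1) (by omega)]
            have hX := hCT.2 (t+1) (by omega) (by omega)
            have hX' : Xor' (Splits (u (mIdx k n t)) (u (mIdx k n (t+1))) (u (mIdx k n (t+1) + 1)))
                (Splits (u (mIdx k n t + 1)) (u (mIdx k n (t+1))) (u (mIdx k n (t+1) + 1))) := hX
            have hE := lemE hX'
            linarith
        · -- shallow case : t = T and mIdx T < k
          push_neg at hdeep
          have hteq : t = T := by
            by_contra hne
            have hlt : t < T := lt_of_le_of_ne htT hne
            have h1 := hsep t T hlt le_rfl
            have h2 := hpos T le_rfl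
            omega
          have h1M : 1 ≤ mIdx k n t := hpos t htT
          have hMle : ∀ s, s ≤ T → mIdx k n t ≤ mIdx k n s := fun s hs =>
            hmono s t (by omega) htT
          have hcore : ∀ i ∈ Finset.Ioo 0 (mIdx k n t), v i = u i := by
            intro i hi
            rw [Finset.mem_Ioo] at hi
            apply hvU
            intro s hs
            have := hMle s hs; omega
          have hfc : ∀ c : ℕ,
              ((Finset.Ioo 0 (mIdx k n t)).filter (fun i => c < v i)).card
              = ((Finset.Ioo 0 (mIdx k n t)).filter (fun i => c < u i)).card := by
            intro c
            refine congrArg Finset.card (Finset.filter_congr ?_)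
            intro i hi
            rw [hcore i hi]
          rw [Cc_eval_shallow hk v hdeep, Cc_eval_shallow_plus hk v h1M hdeep,
            Cc_eval_shallow hk u hdeep, Cc_eval_shallow_plus hk u h1M hdeep]
          simp only [hvM, hvM1]
          rw [hfc (u (mIdx k n t + 1)), hfc (u (mIdx k n t))]
          rw [hsgt, hsggt (t+1) (by omega)]
          ring
      rw [hpsZ (Cc k v), hpsZ (Cc k u), Finset.sum_congr rfl hδ,
        Finset.sum_add_distrib, Finset.sum_range_sub' sg (T+1)]
      have hsgT1 : sg (T+1) = 0 := hsggt (T+1) (by omega)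
      have hsg0 : sg 0 = II (u (mIdx k n 0 + 1)) (u (mIdx k n 0))
          - II (u (mIdx k n 0)) (u (mIdx k n 0 + 1)) := hsgle 0 (Nat.zero_le T)
      have hone : (0+1)*k = k := by ring
      have hm0 : mIdx k n 0 + k = n := by
        have h1 := hexact 0 (Nat.zero_le T)
        omega
      have hcoretop : ∀ i ∈ Finset.Ioo (mIdx k n 0 + 1) n, v i = u i := by
        intro i hi
        rw [Finset.mem_Ioo] at hi
        apply hvU
        intro s hs
        have := hmono 0 s (Nat.zero_le s) hs
        omega
      have hfct : ∀ c : ℕ,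
          ((Finset.Ioo (mIdx k n 0 + 1) n).filter (fun i => c < v i)).card
          = ((Finset.Ioo (mIdx k n 0 + 1) n).filter (fun i => c < u i)).card := by
        intro c
        refine congrArg Finset.card (Finset.filter_congr ?_)
        intro i hi
        rw [hcoretop i hi]
      rw [Cc_eval_deep hk v hm0, Cc_eval_topk1 hk u hm0]
      simp only [hvn]
      rw [hfct (u n), hvA 0 (Nat.zero_le T), hvB 0 (Nat.zero_le T)]
      have hbase2 : Splits (u n) (u (mIdx k n 0)) (u (mIdx k n 0 + 1)) := by
        have e : n - k = mIdx k n 0 := by rw [mIdx]; omega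
        rw [e] at hbase
        exact hbase
      have hB := lemBase hbase2
      rw [hsgT1, hsg0]
      linarith
    have hzz : Cc k v n + ∑ p ∈ PS, Cc k v p = Cc (k-1) u n + ∑ p ∈ PS, Cc k u p := by
      have h := hz
      have : ((Cc k v n + ∑ p ∈ PS, Cc k v p : ℕ) : ℤ)
          = ((Cc (k-1) u n + ∑ p ∈ PS, Cc k u p : ℕ) : ℤ) := by
        push_cast
        exact h
      exact_mod_cast this
    have heta : (Finset.Icc 1 (n-1) \ PS).sum (Cc k u)
        = ∑ x ∈ Finset.Icc 1 (n-1) \ PS, Cc k u x := rfl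
    omega

lemma majKF_eq_sum (k n : ℕ) (w : ℕ → ℕ) :
    majKF k n w = ∑ j ∈ Finset.Icc 1 n, Cc k w j := by
  have h1 : (InvKF k n w).card
      = ∑ j ∈ Finset.Icc 1 n, ((Finset.Ioo (j - k) j).filter (fun i => w j < w i)).card := by
    rw [InvKF, Finset.card_eq_sum_card_fiberwise (f := Prod.snd) (t := Finset.Icc 1 n)
      (by intro p hp; simp only [Finset.mem_coe, Finset.mem_filter, Finset.mem_product] at hp; exact hp.1.2)]
    refine Finset.sum_congr rfl ?_
    intro j hj
    simp only [Finset.mem_Icc] at hj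
    apply Finset.card_bij (fun p _ => p.1)
    · intro p hp
      simp only [Finset.mem_filter, Finset.mem_product, Finset.mem_Icc, Finset.mem_Ioo] at hp ⊢
      obtain ⟨⟨⟨⟨h1a, _⟩, _⟩, hlt, hdk, hw⟩, hsnd⟩ := hp
      rw [hsnd] at hlt hdk hw
      exact ⟨⟨by omega, hlt⟩, hw⟩
    · intro p hp q hq h
      simp only [Finset.mem_filter] at hp hq
      have := hp.2; have := hq.2
      ext
      · exact h
      · rw [hp.2, hq.2]
    · intro i hi
      simp only [Finset.mem_filter, Finset.mem_Ioo] at hi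
      refine ⟨(i, j), ?_, rfl⟩
      simp only [Finset.mem_filter, Finset.mem_product, Finset.mem_Icc]
      refine ⟨⟨⟨⟨by omega, by omega⟩, ⟨hj.1, hj.2⟩⟩, hi.1.2, by omega, hi.2⟩, trivial⟩
  have h2 : ∑ i ∈ DesKF k n w, i
      = ∑ j ∈ Finset.Icc 1 n, (if k < j ∧ w j < w (j - k) then j - k else 0) := by
    rw [DesKF]
    rw [show ∑ j ∈ Finset.Icc 1 n, (if k < j ∧ w j < w (j - k) then j - k else 0)
        = ∑ j ∈ (Finset.Icc 1 n).filter (fun j => k < j ∧ w j < w (j - k)), (j - k) from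
      (Finset.sum_filter _ _).symm]
    apply Finset.sum_nbij' (i := fun i => i + k) (j := fun j => j - k)
    · intro a ha
      simp only [Finset.mem_filter, Finset.mem_Icc] at ha ⊢
      refine ⟨⟨by omega, by omega⟩, by omega, ?_⟩
      have : a + k - k = a := by omega
      rw [this]; exact ha.2.2
    · intro a ha
      simp only [Finset.mem_filter, Finset.mem_Icc] at ha ⊢
      refine ⟨⟨by omega, by omega⟩, by omega, ?_⟩
      have : a - k + k = a := by omega
      rw [this]; exact ha.2.2
    · intro a ha; omega
    · intro a ha
      simp only [Finset.mem_filter, Finset.mem_Icc] at ha; omega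
    · intro a ha; omega
  rw [majKF, h1, h2, ← Finset.sum_add_distrib]
  rfl

/-- positions not touched by phiAux -/
lemma phiAux_high (k : ℕ) (hk : 2 ≤ k) (w : ℕ → ℕ) :
    ∀ j p, j + 2 ≤ p + k → phiAux k w j p = w p := by
  intro j
  induction j with
  | zero => intro p _; rfl
  | succ j ih =>
    intro p hp
    show gamW k (j+1) (phiAux k w j) p = w p
    rw [gamW]
    rw [if_neg, if_neg]
    · exact ih p (by omega)
    · rintro ⟨h1, t, ht, -⟩
      have hkk : k ≤ (t+1)*k := by nlinarith
      omega
    · rintro ⟨h1, t, ht, -⟩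
      have hkk : k ≤ (t+1)*k := by nlinarith
      omega

/-- majKF only depends on positions 1..n -/
lemma majKF_congr (k n : ℕ) (w w' : ℕ → ℕ) (h : ∀ i, 1 ≤ i → i ≤ n → w i = w' i) :
    majKF k n w = majKF k n w' := by
  rw [majKF, majKF]
  congr 1
  · rw [InvKF, InvKF]
    congr 1
    apply Finset.filter_congr
    intro p hp
    simp only [Finset.mem_product, Finset.mem_Icc] at hp
    rw [h p.1 hp.1.1 hp.1.2, h p.2 hp.2.1 hp.2.2]
  · rw [DesKF, DesKF]
    apply Finset.sum_congr
    apply Finset.filter_congr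
    intro i hi
    simp only [Finset.mem_Icc] at hi
    constructor
    · rintro ⟨h1, h2⟩
      rw [h (i+k) (by omega) h1, h i hi.1 hi.2] at h2
      exact ⟨h1, h2⟩
    · rintro ⟨h1, h2⟩
      rw [← h (i+k) (by omega) h1, ← h i hi.1 hi.2] at h2
      exact ⟨h1, h2⟩
    · intro x _; rfl

/-- main function-level statement -/
lemma mainQ (k : ℕ) (hk : 2 ≤ k) : ∀ n (w : ℕ → ℕ),
    majKF (k-1) n w = majKF k n (phiAux k w n) := by
  intro n
  induction n with
  | zero =>
    intro w
    rw [majKF, majKF]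
    have : ∀ k' (w' : ℕ → ℕ), InvKF k' 0 w' = ∅ := by
      intro k' w'; rw [InvKF]
      simp [Finset.Icc_self, Finset.filter_eq_empty_iff]
    have hd : ∀ k' (w' : ℕ → ℕ), DesKF k' 0 w' = ∅ := by
      intro k' w'; rw [DesKF]
      apply Finset.filter_eq_empty_iff.2
      intro x hx
      simp at hx
    rw [this, this, hd, hd]
  | succ n ih =>
    intro w
    have hL := lemL k (n+1) hk (phiAux k w n)
    have hstep : phiAux k w (n+1) = gamW k (n+1) (phiAux k w n) := rfl
    rw [majKF_eq_sum k (n+1), hstep, hL]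
    have hsucc : ∑ j ∈ Finset.Icc 1 (n+1), Cc (k-1) w j
        = ∑ j ∈ Finset.Icc 1 n, Cc (k-1) w j + Cc (k-1) w (n+1) := by
      rw [← Finset.sum_Icc_succ_top (by omega : 1 ≤ n+1)]
    have hCc : Cc (k-1) (phiAux k w n) (n+1) = Cc (k-1) w (n+1) := by
      rw [Cc, Cc]
      have hv : ∀ p, n + 2 ≤ p + k → phiAux k w n p = w p := fun p hp =>
        phiAux_high k hk w n p hp
      have e1 : phiAux k w n (n+1) = w (n+1) := hv _ (by omega)
      have e2 : phiAux k w n (n+1-(k-1)) = w (n+1-(k-1)) := hv _ (by omega)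
      congr 1
      · congr 1
        apply Finset.filter_congr
        intro i hi
        simp only [Finset.mem_Ioo] at hi
        rw [e1, hv i (by omega)]
      · rw [e1, e2]
    rw [majKF_eq_sum (k-1) (n+1), hsucc, ← majKF_eq_sum (k-1) n,
        show n+1-1 = n from rfl, ih w, majKF_eq_sum k n, hCc]


theorem majk_phi (k : ℕ) (hk : 2 ≤ k) (l : List ℕ) (hl : ∀ x ∈ l, 0 < x) :
    majKL (k - 1) l = majKL k (phiL k l) := by
  have hlen : (phiL k l).length = l.length := by
    rw [phiL, List.length_ofFn]
  have hwf : ∀ i, 1 ≤ i → i ≤ l.length → wf (phiL k l) i = phiW k l.length (wf l) i := by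
    intro i h1 h2
    rw [wf, phiL]
    have hi : i - 1 < l.length := by omega
    rw [List.getD_eq_getElem _ _ (by rwa [List.length_ofFn])]
    simp only [List.getElem_ofFn]
    congr 1
    omega
  rw [majKL, majKL, hlen, majKF_congr k l.length _ _ hwf]
  exact mainQ k hk l.length (wf l)
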